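/- arXiv:2002.01108 — 2 statements merged into one kernel-verified Lean document; each statement's English description precedes it below -/
import Mathlib

section
/- For every ε ∈ (0,1], the matrix P_ε⁻¹L is diagonalizable over ℝ: there exist an invertible matrix V̂ ∈ ℝ^{NJ×NJ} and a diagonal matrix D̂ ∈ ℝ^{NJ×NJ} such that P_ε⁻¹L = V̂ D̂ V̂⁻¹, where exactly (N−1)J of the diagonal entries of D̂ equal 1 and the remaining J diagonal entries are strictly greater than 1. -/
open Matrix

/-- The all-at-once block lower bidiagonal matrix `L` whose `(i,j)`-th `J × J`
block equals `A₀` if `i = j`, `−M` if `i = j + 1`, and `0` otherwise. -/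
def Lmat (N J : ℕ) (A₀ M : Matrix (Fin J) (Fin J) ℝ) :
    Matrix (Fin N × Fin J) (Fin N × Fin J) ℝ :=
  Matrix.of fun p q =>
    if p.1 = q.1 then A₀ p.2 q.2
    else if (p.1 : ℕ) = (q.1 : ℕ) + 1 then -M p.2 q.2 else 0

/-- `E_i = e_i ⊗ I_J`, where `e_i` is the `i`-th standard basis vector of `ℝ^N`. -/
def Emat (N J : ℕ) (i : Fin N) : Matrix (Fin N × Fin J) (Fin J) ℝ :=
  Matrix.of fun p y => if p.1 = i ∧ p.2 = y then 1 else 0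

/-- The block `ε`-circulant preconditioner `P_ε`, agreeing with `L` in every
block except that the top-right `(1,N)`-th `J × J` block equals `−εM`;
equivalently `P_ε = L − ε E₁ M E_Nᵀ`. -/
noncomputable def Pmat (N J : ℕ) (hN : 0 < N) (A₀ M : Matrix (Fin J) (Fin J) ℝ)
    (ε : ℝ) : Matrix (Fin N × Fin J) (Fin N × Fin J) ℝ :=
  Lmat N J A₀ M -
    ε • (Emat N J ⟨0, hN⟩ * M * (Emat N J ⟨N - 1, Nat.sub_lt hN Nat.one_pos⟩)ᵀ)


lemma aux_sum_ite_chain {α : Type*} [Fintype α] (c₁ c₂ : Prop) [Decidable c₁] [Decidable c₂]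
    (f g : α → ℝ) :
    (∑ w, if c₁ then f w else if c₂ then g w else 0) =
      (if c₁ then ∑ w, f w else if c₂ then ∑ w, g w else 0) := by
  split_ifs <;> simp

lemma aux_sum_ite_single {α : Type*} [Fintype α] (c : Prop) [Decidable c] (f : α → ℝ) :
    (∑ w, if c then f w else 0) = (if c then ∑ w, f w else 0) := by
  split_ifs <;> simp

lemma aux_conj_pow {G : Type*} [Monoid G] {a b s : G} (hab : a * b = 1) (hba : b * a = 1)
    (k : ℕ) : (b * s * a) ^ k = b * s ^ k * a := by
  induction k with
  | zero => simpa using hba.symm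
  | succ k ih =>
    rw [pow_succ, ih, pow_succ]
    calc b * s ^ k * a * (b * s * a)
        = b * s ^ k * (a * b) * s * a := by simp only [mul_assoc]
      _ = b * (s ^ k * s) * a := by rw [hab, mul_one]; simp only [mul_assoc]

lemma aux_posDef_smul {J : Type*} [Fintype J] [DecidableEq J] {A : Matrix J J ℝ}
    (hA : A.PosDef) {c : ℝ} (hc : 0 < c) : (c • A).PosDef := by
  exact hA.smul hc

lemma aux_posDef_conj {J : Type*} [Fintype J] [DecidableEq J] {A B : Matrix J J ℝ}
    (hA : A.PosDef) (hB : IsUnit B) : (Bᴴ * A * B).PosDef := by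
  exact hA.conjTranspose_mul_mul_same (Matrix.mulVec_injective_iff_isUnit.mpr hB)

lemma Emat_mul_apply {N J : ℕ} (i : Fin N) (B : Matrix (Fin J) (Fin J) ℝ)
    (p : Fin N × Fin J) (w : Fin J) :
    (Emat N J i * B) p w = if p.1 = i then B p.2 w else 0 := by
  rw [Matrix.mul_apply]
  simp [Emat, ite_and, Finset.sum_ite_eq]

lemma mul_EmatT_apply {N J : ℕ} (j : Fin N) (C : Matrix (Fin N × Fin J) (Fin J) ℝ)
    (p q : Fin N × Fin J) :
    (C * (Emat N J j)ᵀ) p q = if q.1 = j then C p q.2 else 0 := by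
  rw [Matrix.mul_apply]
  simp [Emat, ite_and, Finset.sum_ite_eq', mul_ite, mul_one, mul_zero]

lemma Emat_mul_mul_transpose {N J : ℕ} (i j : Fin N) (B : Matrix (Fin J) (Fin J) ℝ)
    (p q : Fin N × Fin J) :
    (Emat N J i * B * (Emat N J j)ᵀ) p q = if p.1 = i ∧ q.1 = j then B p.2 q.2 else 0 := by
  rw [mul_EmatT_apply, Emat_mul_apply]
  by_cases hp : p.1 = i <;> by_cases hq : q.1 = j <;> simp [hp, hq]

lemma Emat_transpose_mul {N J : ℕ} (i : Fin N) (X : Matrix (Fin N × Fin J) (Fin J) ℝ)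
    (z : Fin J) (q : Fin J) : ((Emat N J i)ᵀ * X) z q = X (i, z) q := by
  rw [Matrix.mul_apply, Fintype.sum_prod_type]
  simp [Emat, ite_and, Finset.sum_ite_eq, Finset.sum_ite_eq']

lemma Pmat_apply {N J : ℕ} (hN : 0 < N) (A₀ M : Matrix (Fin J) (Fin J) ℝ) (ε : ℝ)
    (p q : Fin N × Fin J) :
    Pmat N J hN A₀ M ε p q =
      (if p.1 = q.1 then A₀ p.2 q.2 else if (p.1 : ℕ) = (q.1 : ℕ) + 1 then -M p.2 q.2 else 0)
      - (if p.1 = ⟨0, hN⟩ ∧ q.1 = ⟨N - 1, Nat.sub_lt hN Nat.one_pos⟩ then ε * M p.2 q.2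
         else 0) := by
  rw [Pmat, Matrix.sub_apply, Matrix.smul_apply, Emat_mul_mul_transpose]
  rw [Lmat]
  simp only [Matrix.of_apply, smul_eq_mul, mul_ite, mul_zero]

lemma Pmat_mul_col {N J : ℕ} (hN : 0 < N) (A₀ M : Matrix (Fin J) (Fin J) ℝ) (ε : ℝ)
    (X : Fin N → Matrix (Fin J) (Fin J) ℝ) :
    Pmat N J hN A₀ M ε * (Matrix.of (fun p z => X p.1 p.2 z) : Matrix (Fin N × Fin J) (Fin J) ℝ) =
    Matrix.of (fun (p : Fin N × Fin J) (z : Fin J) =>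
      (A₀ * X p.1) p.2 z -
      (if (p.1 : ℕ) = 0 then
          ε * (M * X ⟨N - 1, Nat.sub_lt hN Nat.one_pos⟩) p.2 z
       else (M * X ⟨(p.1 : ℕ) - 1, lt_of_le_of_lt (Nat.sub_le _ _) p.1.isLt⟩) p.2 z)) := by
  ext p z
  obtain ⟨i, y⟩ := p
  rw [Matrix.mul_apply, Fintype.sum_prod_type]
  have key : ∀ (j : Fin N) (w : Fin J),
      Pmat N J hN A₀ M ε (i, y) (j, w) * (Matrix.of fun p z => X p.1 p.2 z) (j, w) z
      = ((if i = j then A₀ y w * X j w z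
          else if (i : ℕ) = (j : ℕ) + 1 then -(M y w * X j w z) else 0)
        - (if i = ⟨0, hN⟩ ∧ j = ⟨N - 1, Nat.sub_lt hN Nat.one_pos⟩
            then ε * (M y w * X j w z) else 0)) := by
    intro j w
    rw [Pmat_apply]
    simp only [Matrix.of_apply]
    split_ifs <;> ring
  have inner : ∀ j : Fin N,
      (∑ w, Pmat N J hN A₀ M ε (i, y) (j, w) * (Matrix.of fun p z => X p.1 p.2 z) (j, w) z)
      = ((if i = j then (A₀ * X j) y z
          else if (i : ℕ) = (j : ℕ) + 1 then -((M * X j) y z) else 0)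
        - (if i = ⟨0, hN⟩ ∧ j = ⟨N - 1, Nat.sub_lt hN Nat.one_pos⟩
            then ε * ((M * X j) y z) else 0)) := by
    intro j
    rw [Finset.sum_congr rfl (fun w _ => key j w), Finset.sum_sub_distrib,
      aux_sum_ite_chain, aux_sum_ite_single]
    simp only [Matrix.mul_apply, ← Finset.sum_neg_distrib, Finset.mul_sum]
  rw [Finset.sum_congr rfl (fun j _ => inner j), Finset.sum_sub_distrib]
  have corner : (∑ j, if i = ⟨0, hN⟩ ∧ j = ⟨N - 1, Nat.sub_lt hN Nat.one_pos⟩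
      then ε * ((M * X j) y z) else 0)
      = if i = ⟨0, hN⟩ then ε * ((M * X ⟨N - 1, Nat.sub_lt hN Nat.one_pos⟩) y z) else 0 := by
    simp only [ite_and]
    rw [aux_sum_ite_single]
    rw [Finset.sum_ite_eq' Finset.univ]
    simp
  rw [corner]
  simp only [Matrix.of_apply]
  obtain ⟨iv, hiv⟩ := i
  cases iv with
  | zero =>
    have h2 : ∀ j : Fin N,
        (if (⟨0, hiv⟩ : Fin N) = j then (A₀ * X j) y z
         else if ((⟨0, hiv⟩ : Fin N) : ℕ) = (j : ℕ) + 1 then -((M * X j) y z) else 0)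
        = (if (⟨0, hiv⟩ : Fin N) = j then (A₀ * X j) y z else 0) := by
      intro j
      rcases eq_or_ne (⟨0, hiv⟩ : Fin N) j with h | h
      · simp [h]
      · rw [if_neg h, if_neg h, if_neg (by simp)]
    rw [Finset.sum_congr rfl (fun j _ => h2 j), Finset.sum_ite_eq Finset.univ]
    simp
  | succ m =>
    have hmlt : m < N := by omega
    have h2 : ∀ j : Fin N,
        (if (⟨m + 1, hiv⟩ : Fin N) = j then (A₀ * X j) y z
         else if ((⟨m + 1, hiv⟩ : Fin N) : ℕ) = (j : ℕ) + 1 then -((M * X j) y z) else 0)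
        = (if j = ⟨m + 1, hiv⟩ then (A₀ * X j) y z else 0)
          + (if j = ⟨m, hmlt⟩ then -((M * X j) y z) else 0) := by
      intro j
      by_cases h1 : (⟨m + 1, hiv⟩ : Fin N) = j
      · rw [if_pos h1, if_pos h1.symm, if_neg (by rw [← h1]; simp [Fin.ext_iff]), add_zero]
      · rw [if_neg h1, if_neg (show ¬(j = (⟨m + 1, hiv⟩ : Fin N)) from fun hh => h1 hh.symm),
          zero_add]
        have hcond : (((⟨m + 1, hiv⟩ : Fin N) : ℕ) = (j : ℕ) + 1) ↔ (j = ⟨m, hmlt⟩) := by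
          rw [Fin.ext_iff]
          show m + 1 = (j : ℕ) + 1 ↔ (j : ℕ) = m
          omega
        rw [if_congr hcond rfl rfl]
    rw [Finset.sum_congr rfl (fun j _ => h2 j), Finset.sum_add_distrib,
      Finset.sum_ite_eq' Finset.univ, Finset.sum_ite_eq' Finset.univ]
    simp only [Finset.mem_univ, if_true]
    rw [if_neg (by simp [Fin.ext_iff]), if_neg (by simp), sub_zero]
    have hidx : (⟨(((⟨m + 1, hiv⟩ : Fin N) : ℕ)) - 1,
        lt_of_le_of_lt (Nat.sub_le _ _) (⟨m + 1, hiv⟩ : Fin N).isLt⟩ : Fin N) = ⟨m, hmlt⟩ := by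
      simp
    rw [hidx]
    ring

set_option maxHeartbeats 2000000 in
/-- For every `ε ∈ (0,1]`, `P_ε⁻¹ L` is diagonalizable over
`ℝ`: there exist an invertible `V̂` and a diagonal `D̂` with
`P_ε⁻¹ L = V̂ D̂ V̂⁻¹`, where exactly `(N−1)J` diagonal entries of `D̂` equal `1`
and the remaining `J` diagonal entries are strictly greater than `1`. -/
theorem statement12 (N J : ℕ) (hN : 0 < N) (hJ : 0 < J) (τ : ℝ) (hτ : 0 < τ)
    (M K : Matrix (Fin J) (Fin J) ℝ) (hM : M.PosDef) (hK : K.PosDef)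
    (A₀ : Matrix (Fin J) (Fin J) ℝ) (hA₀ : A₀ = M + τ • K)
    (ε : ℝ) (hε0 : 0 < ε) (hε1 : ε ≤ 1) :
    ∃ V D : Matrix (Fin N × Fin J) (Fin N × Fin J) ℝ,
      IsUnit V ∧ D.IsDiag ∧
      (Pmat N J hN A₀ M ε)⁻¹ * Lmat N J A₀ M = V * D * V⁻¹ ∧
      (Finset.univ.filter fun i : Fin N × Fin J => D i i = 1).card = (N - 1) * J ∧
      (Finset.univ.filter fun i : Fin N × Fin J => 1 < D i i).card = J ∧
      ∀ i : Fin N × Fin J, D i i = 1 ∨ 1 < D i i := by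
  classical
  -- basic invertibility facts
  have hMdet : IsUnit M.det := (Matrix.isUnit_iff_isUnit_det M).mp hM.isUnit
  have hA0pd : A₀.PosDef := by
    rw [hA₀]; exact hM.add (aux_posDef_smul hK hτ)
  have hA0det : IsUnit A₀.det := (Matrix.isUnit_iff_isUnit_det A₀).mp hA0pd.isUnit
  have cA : ∀ X : Matrix (Fin J) (Fin J) ℝ, A₀ * (A₀⁻¹ * X) = X := fun X => by
    rw [← Matrix.mul_assoc, Matrix.mul_nonsing_inv _ hA0det, Matrix.one_mul]
  have cA' : ∀ X : Matrix (Fin J) (Fin J) ℝ, A₀⁻¹ * (A₀ * X) = X := fun X => by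
    rw [← Matrix.mul_assoc, Matrix.nonsing_inv_mul _ hA0det, Matrix.one_mul]
  -- the square root of M
  obtain ⟨R, hRR, hRH⟩ : ∃ R : Matrix (Fin J) (Fin J) ℝ, R * R = M ∧ Rᴴ = R :=
    open scoped MatrixOrder in ⟨CFC.sqrt M, CFC.sqrt_mul_sqrt_self M hM.posSemidef.nonneg,
      (CFC.sqrt_nonneg M).posSemidef.isHermitian⟩
  have hRunit : IsUnit R := by
    rw [Matrix.isUnit_iff_isUnit_det]
    have : R.det * R.det = M.det := by rw [← Matrix.det_mul, hRR]
    exact isUnit_of_mul_isUnit_left (this ▸ hMdet)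
  have hRdet : IsUnit R.det := (Matrix.isUnit_iff_isUnit_det R).mp hRunit
  have hRiR : R⁻¹ * R = 1 := Matrix.nonsing_inv_mul _ hRdet
  have hRRi : R * R⁻¹ = 1 := Matrix.mul_nonsing_inv _ hRdet
  have cR : ∀ X : Matrix (Fin J) (Fin J) ℝ, R * (R⁻¹ * X) = X := fun X => by
    rw [← Matrix.mul_assoc, hRRi, Matrix.one_mul]
  have cR' : ∀ X : Matrix (Fin J) (Fin J) ℝ, R⁻¹ * (R * X) = X := fun X => by
    rw [← Matrix.mul_assoc, hRiR, Matrix.one_mul]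
  -- the symmetrized matrix S and its spectral decomposition
  set S : Matrix (Fin J) (Fin J) ℝ := R * A₀⁻¹ * R with hSdef
  have hSpd : S.PosDef := by
    have := aux_posDef_conj hA0pd.inv hRunit
    rwa [hRH] at this
  have hSH : S.IsHermitian := hSpd.1
  obtain ⟨Q, μ, hQQ, hQQ', hspec⟩ : ∃ (Q : Matrix (Fin J) (Fin J) ℝ) (μ : Fin J → ℝ),
      Q * star Q = 1 ∧ star Q * Q = 1 ∧ S = Q * Matrix.diagonal μ * star Q := by
    refine ⟨(hSH.eigenvectorUnitary : Matrix (Fin J) (Fin J) ℝ), hSH.eigenvalues,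
      Matrix.mem_unitaryGroup_iff.mp (hSH.eigenvectorUnitary).2,
      Matrix.mem_unitaryGroup_iff'.mp (hSH.eigenvectorUnitary).2, ?_⟩
    have h := hSH.spectral_theorem
    rwa [RCLike.ofReal_real_eq_id, Function.id_comp] at h
  have hQunit : IsUnit Q := (Matrix.isUnit_iff_isUnit_det _).mpr (Matrix.isUnit_det_of_right_inverse hQQ)
  have cQ : ∀ X : Matrix (Fin J) (Fin J) ℝ, Q * (star Q * X) = X := fun X => by
    rw [← Matrix.mul_assoc, hQQ, Matrix.one_mul]
  have cQ' : ∀ X : Matrix (Fin J) (Fin J) ℝ, star Q * (Q * X) = X := fun X => by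
    rw [← Matrix.mul_assoc, hQQ', Matrix.one_mul]
  have hdiagS : star Q * S * Q = Matrix.diagonal μ := by
    rw [hspec]
    calc star Q * (Q * Matrix.diagonal μ * star Q) * Q
        = star Q * Q * Matrix.diagonal μ * (star Q * Q) := by simp only [Matrix.mul_assoc]
      _ = Matrix.diagonal μ := by rw [hQQ', Matrix.one_mul, Matrix.mul_one]
  have hμpos : ∀ k, 0 < μ k := by
    have hconj : (star Q * S * Q).PosDef := by
      have := aux_posDef_conj hSpd hQunit
      rwa [← Matrix.star_eq_conjTranspose] at this
    rw [hdiagS] at hconj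
    exact Matrix.posDef_diagonal_iff.mp hconj
  -- eigenvalues of S are < 1
  have hkey : A₀ * M⁻¹ * A₀ - A₀ = τ • K + (τ * τ) • (K * M⁻¹ * K) := by
    rw [hA₀]
    have h1 : (M + τ • K) * M⁻¹ = 1 + τ • (K * M⁻¹) := by
      rw [Matrix.add_mul, Matrix.mul_nonsing_inv _ hMdet, Matrix.smul_mul]
    rw [h1, Matrix.add_mul, Matrix.one_mul, Matrix.smul_mul, Matrix.mul_add]
    have h2 : K * M⁻¹ * M = K := Matrix.nonsing_inv_mul_cancel_right _ _ hMdet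
    rw [smul_add, h2, Matrix.mul_smul, smul_smul]
    abel
  have h1S : (1 - S).PosDef := by
    have hW : (τ • K + (τ * τ) • (K * M⁻¹ * K)).PosDef := by
      refine (aux_posDef_smul hK hτ).add_posSemidef ?_
      have : (Kᴴ * M⁻¹ * K).PosDef := aux_posDef_conj hM.inv hK.isUnit
      rw [hK.1.eq] at this
      exact (aux_posDef_smul this (mul_pos hτ hτ)).posSemidef
    have key2 : 1 - S = (A₀⁻¹ * R)ᴴ * (τ • K + (τ * τ) • (K * M⁻¹ * K)) * (A₀⁻¹ * R) := by
      rw [← hkey, Matrix.conjTranspose_mul, hRH, Matrix.conjTranspose_nonsing_inv,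
        hA0pd.1.eq]
      have expand : R * A₀⁻¹ * (A₀ * M⁻¹ * A₀ - A₀) * (A₀⁻¹ * R)
          = R * M⁻¹ * R - R * A₀⁻¹ * R := by
        rw [Matrix.mul_sub, Matrix.sub_mul]
        congr 1
        · calc R * A₀⁻¹ * (A₀ * M⁻¹ * A₀) * (A₀⁻¹ * R)
              = R * (A₀⁻¹ * (A₀ * (M⁻¹ * (A₀ * (A₀⁻¹ * R))))) := by
                simp only [Matrix.mul_assoc]
            _ = R * (M⁻¹ * R) := by rw [cA, cA']
            _ = R * M⁻¹ * R := by rw [Matrix.mul_assoc]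
        · calc R * A₀⁻¹ * A₀ * (A₀⁻¹ * R)
              = R * (A₀⁻¹ * (A₀ * (A₀⁻¹ * R))) := by simp only [Matrix.mul_assoc]
            _ = R * (A₀⁻¹ * R) := by rw [cA]
            _ = R * A₀⁻¹ * R := by rw [Matrix.mul_assoc]
      rw [expand, ← hSdef]
      have hRMR : R * M⁻¹ * R = 1 := by
        rw [← hRR, Matrix.mul_inv_rev]
        calc R * (R⁻¹ * R⁻¹) * R = R * (R⁻¹ * (R⁻¹ * R)) := by simp only [Matrix.mul_assoc]
          _ = 1 := by rw [hRiR, Matrix.mul_one, hRRi]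
      rw [hRMR]
    rw [key2]
    exact aux_posDef_conj hW (hA0pd.inv.isUnit.mul hRunit)
  have hμlt : ∀ k, μ k < 1 := by
    have hconj : (star Q * (1 - S) * Q).PosDef := by
      have := aux_posDef_conj h1S hQunit
      rwa [← Matrix.star_eq_conjTranspose] at this
    have hdiag1 : star Q * (1 - S) * Q = Matrix.diagonal (fun k => 1 - μ k) := by
      rw [Matrix.mul_sub, Matrix.mul_one, Matrix.sub_mul, hQQ', hspec]
      calc (1 : Matrix (Fin J) (Fin J) ℝ) -
            star Q * (Q * Matrix.diagonal μ * star Q) * Q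
          = 1 - Matrix.diagonal μ := by
            rw [show star Q * (Q * Matrix.diagonal μ * star Q) * Q
                = star Q * Q * Matrix.diagonal μ * (star Q * Q) by
                  simp only [Matrix.mul_assoc], hQQ', Matrix.one_mul, Matrix.mul_one]
        _ = Matrix.diagonal (fun k => 1 - μ k) := by
            rw [← Matrix.diagonal_one, Matrix.diagonal_sub]
    rw [hdiag1] at hconj
    intro k
    have := Matrix.posDef_diagonal_iff.mp hconj k
    linarith
  -- numeric quantities
  have hν1 : ∀ k, μ k ^ N < 1 := fun k => pow_lt_one₀ (hμpos k).le (hμlt k) hN.ne'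
  have hgpos : ∀ k, 0 < 1 - ε * μ k ^ N := by
    intro k
    have hp := pow_pos (hμpos k) N
    nlinarith [hν1 k]
  have hdpos : ∀ k, 0 < μ k ^ N * (1 - ε * μ k ^ N)⁻¹ := fun k =>
    mul_pos (pow_pos (hμpos k) N) (inv_pos.mpr (hgpos k))
  -- T and conjugation identities
  set T : Matrix (Fin J) (Fin J) ℝ := A₀⁻¹ * M with hTdef
  have hA0T : A₀ * T = M := cA M
  have hTc : T = R⁻¹ * S * R := by
    calc T = A₀⁻¹ * (R * R) := by rw [hTdef, hRR]
      _ = R⁻¹ * (R * (A₀⁻¹ * (R * R))) := (cR' _).symm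
      _ = R⁻¹ * (R * A₀⁻¹ * R) * R := by simp only [Matrix.mul_assoc]
      _ = R⁻¹ * S * R := by rw [← hSdef]
  have hTpow : ∀ k : ℕ, T ^ k = R⁻¹ * S ^ k * R := fun k => by
    rw [hTc]; exact aux_conj_pow hRRi hRiR k
  have hSpow : ∀ k : ℕ, S ^ k = Q * Matrix.diagonal (fun j => μ j ^ k) * star Q := by
    intro k
    rw [hspec, aux_conj_pow hQQ' hQQ k, Matrix.diagonal_pow]
    rfl
  -- C and its explicit inverse
  set C : Matrix (Fin J) (Fin J) ℝ := A₀ - ε • (M * T ^ (N - 1)) with hCdef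
  set Cinv : Matrix (Fin J) (Fin J) ℝ :=
    R⁻¹ * (Q * (Matrix.diagonal (fun k => (1 - ε * μ k ^ N)⁻¹) * (star Q * R))) * A₀⁻¹
    with hCinvdef
  have conj_mul : ∀ f g : Fin J → ℝ,
      (R⁻¹ * (Q * (Matrix.diagonal f * (star Q * R)))) *
        (R⁻¹ * (Q * (Matrix.diagonal g * (star Q * R))))
      = R⁻¹ * (Q * (Matrix.diagonal (fun k => f k * g k) * (star Q * R))) := by
    intro f g
    calc (R⁻¹ * (Q * (Matrix.diagonal f * (star Q * R)))) *
          (R⁻¹ * (Q * (Matrix.diagonal g * (star Q * R))))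
        = R⁻¹ * (Q * (Matrix.diagonal f *
            (star Q * (R * (R⁻¹ * (Q * (Matrix.diagonal g * (star Q * R)))))))) := by
          simp only [Matrix.mul_assoc]
      _ = R⁻¹ * (Q * (Matrix.diagonal f * (Matrix.diagonal g * (star Q * R)))) := by
          rw [cR, cQ']
      _ = R⁻¹ * (Q * (Matrix.diagonal (fun k => f k * g k) * (star Q * R))) := by
          rw [← Matrix.mul_assoc (Matrix.diagonal f), Matrix.diagonal_mul_diagonal]
  have conj_one : R⁻¹ * (Q * (Matrix.diagonal (fun _ : Fin J => (1:ℝ)) * (star Q * R)))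
      = 1 := by
    rw [Matrix.diagonal_one, Matrix.one_mul, cQ, hRiR]
  have hTN : T ^ N = R⁻¹ * (Q * (Matrix.diagonal (fun k => μ k ^ N) * (star Q * R))) := by
    rw [hTpow N, hSpow N]; simp only [Matrix.mul_assoc]
  have hTNsplit : T ^ N = T * T ^ (N - 1) := by
    conv_lhs => rw [show N = (N - 1) + 1 from (Nat.succ_pred_eq_of_pos hN).symm]
    rw [pow_succ']
  have hMT : M * T ^ (N - 1) = A₀ * T ^ N := by
    rw [hTNsplit, ← Matrix.mul_assoc, hA0T]
  have hCfact : C = A₀ *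
      (R⁻¹ * (Q * (Matrix.diagonal (fun k => 1 - ε * μ k ^ N) * (star Q * R)))) := by
    have hsplit : Matrix.diagonal (fun k => 1 - ε * μ k ^ N)
        = Matrix.diagonal (fun _ : Fin J => (1:ℝ))
          - ε • Matrix.diagonal (fun k => μ k ^ N) := by
      rw [← Matrix.diagonal_smul, Matrix.diagonal_sub]
      rfl
    rw [hCdef, hsplit, Matrix.sub_mul, Matrix.mul_sub, Matrix.mul_sub, conj_one]
    rw [Matrix.mul_sub, Matrix.mul_one]
    congr 1
    rw [hMT, hTN]
    simp only [Matrix.smul_mul, Matrix.mul_smul]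
  have hCC : C * Cinv = 1 := by
    rw [hCinvdef, hCfact, ← Matrix.mul_assoc]
    calc A₀ * (R⁻¹ * (Q * (Matrix.diagonal (fun k => 1 - ε * μ k ^ N) * (star Q * R)))) *
          (R⁻¹ * (Q * (Matrix.diagonal (fun k => (1 - ε * μ k ^ N)⁻¹) * (star Q * R))))
          * A₀⁻¹
        = A₀ * ((R⁻¹ * (Q * (Matrix.diagonal (fun k => 1 - ε * μ k ^ N) * (star Q * R)))) *
            (R⁻¹ * (Q * (Matrix.diagonal (fun k => (1 - ε * μ k ^ N)⁻¹) * (star Q * R)))))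
            * A₀⁻¹ := by simp only [Matrix.mul_assoc]
      _ = A₀ * 1 * A₀⁻¹ := by
          rw [conj_mul]
          rw [show (fun k => (1 - ε * μ k ^ N) * (1 - ε * μ k ^ N)⁻¹) = fun _ : Fin J => (1:ℝ)
            from funext fun k => mul_inv_cancel₀ (hgpos k).ne', conj_one]
      _ = 1 := by rw [Matrix.mul_one, Matrix.mul_nonsing_inv _ hA0det]
  have hCinvC : Cinv * C = 1 := by
    rw [hCinvdef, hCfact]
    calc R⁻¹ * (Q * (Matrix.diagonal (fun k => (1 - ε * μ k ^ N)⁻¹) * (star Q * R))) * A₀⁻¹ *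
          (A₀ * (R⁻¹ * (Q * (Matrix.diagonal (fun k => 1 - ε * μ k ^ N) * (star Q * R)))))
        = R⁻¹ * (Q * (Matrix.diagonal (fun k => (1 - ε * μ k ^ N)⁻¹) * (star Q * R))) *
            (A₀⁻¹ * (A₀ * (R⁻¹ * (Q * (Matrix.diagonal (fun k => 1 - ε * μ k ^ N) *
              (star Q * R)))))) := by simp only [Matrix.mul_assoc]
      _ = R⁻¹ * (Q * (Matrix.diagonal (fun k => (1 - ε * μ k ^ N)⁻¹) * (star Q * R))) *
            (R⁻¹ * (Q * (Matrix.diagonal (fun k => 1 - ε * μ k ^ N) * (star Q * R)))) := by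
          rw [cA']
      _ = 1 := by
          rw [conj_mul]
          rw [show (fun k => (1 - ε * μ k ^ N)⁻¹ * (1 - ε * μ k ^ N)) = fun _ : Fin J => (1:ℝ)
            from funext fun k => inv_mul_cancel₀ (hgpos k).ne', conj_one]
  -- abbreviations for the corner indices
  set nl : Fin N := ⟨N - 1, Nat.sub_lt hN Nat.one_pos⟩ with hnl
  set n0 : Fin N := ⟨0, hN⟩ with hn0
  -- the identity P * Y = E₀ * C
  have hPY : Pmat N J hN A₀ M ε * (Matrix.of (fun (p : Fin N × Fin J) z => (T ^ ((p.1 : Fin N) : ℕ)) p.2 z) : Matrix (Fin N × Fin J) (Fin J) ℝ)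
      = Emat N J n0 * C := by
    rw [Pmat_mul_col hN A₀ M ε (fun i => T ^ ((i : Fin N) : ℕ))]
    ext ⟨i, y⟩ z
    simp only [Matrix.of_apply, Emat_mul_apply]
    by_cases hi : (i : ℕ) = 0
    · have hi' : i = n0 := Fin.ext (by simpa using hi)
      rw [if_pos hi, if_pos hi', hi', hCdef]
      have h0 : ((n0 : Fin N) : ℕ) = 0 := rfl
      rw [h0, pow_zero, Matrix.mul_one]
      rw [Matrix.sub_apply, Matrix.smul_apply, smul_eq_mul]
    · rw [if_neg hi, if_neg (fun h => hi (by rw [h]))]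
      have hsp : T ^ (i : ℕ) = T * T ^ ((i : ℕ) - 1) := by
        conv_lhs => rw [show (i : ℕ) = ((i : ℕ) - 1) + 1 by omega]
        rw [pow_succ']
      rw [hsp, ← Matrix.mul_assoc, hA0T]
      exact sub_self _
  -- P is invertible
  have hker : ∀ v : (Fin N × Fin J) → ℝ, Pmat N J hN A₀ M ε *ᵥ v = 0 → v = 0 := by
    intro v hv
    set Xb : Fin N → Matrix (Fin J) (Fin J) ℝ := fun i => Matrix.of (fun w _ => v (i, w))
      with hXbdef
    have hPX : Pmat N J hN A₀ M ε * (Matrix.of (fun (p : Fin N × Fin J) z => Xb p.1 p.2 z) : Matrix (Fin N × Fin J) (Fin J) ℝ)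
        = 0 := by
      ext ⟨i, y⟩ z
      rw [Matrix.mul_apply]
      have h0 := congr_fun hv (i, y)
      simpa [Matrix.mulVec, dotProduct, hXbdef] using h0
    rw [Pmat_mul_col hN A₀ M ε Xb] at hPX
    rw [← Matrix.ext_iff] at hPX
    have hrow : ∀ (i : Fin N) (y z : Fin J),
        (A₀ * Xb i) y z = (if (i : ℕ) = 0 then
          ε * (M * Xb ⟨N - 1, Nat.sub_lt hN Nat.one_pos⟩) y z
        else (M * Xb ⟨(i : ℕ) - 1, lt_of_le_of_lt (Nat.sub_le _ _) i.isLt⟩) y z) := by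
      intro i y z
      have h := hPX (i, y) z
      simp only [Matrix.of_apply, Matrix.zero_apply] at h
      exact sub_eq_zero.mp h
    have claim : ∀ (m : ℕ) (hm : m < N), Xb ⟨m, hm⟩ = T ^ m * Xb n0 := by
      intro m
      induction m with
      | zero =>
        intro hm
        rw [pow_zero, Matrix.one_mul]
      | succ m ih =>
        intro hm
        have hm' : m < N := by omega
        have hrec : A₀ * Xb ⟨m + 1, hm⟩ = M * Xb ⟨m, hm'⟩ := by
          ext y z
          have h := hrow ⟨m + 1, hm⟩ y z
          rw [if_neg (by simp)] at h
          simpa using h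
        have hstep : Xb ⟨m + 1, hm⟩ = A₀⁻¹ * (M * Xb ⟨m, hm'⟩) := by
          rw [← hrec, cA']
        rw [hstep, ih hm', ← Matrix.mul_assoc, ← Matrix.mul_assoc, ← hTdef, ← pow_succ']
    have he0 : A₀ * Xb n0 = ε • (M * Xb nl) := by
      ext y z
      have h := hrow n0 y z
      rw [if_pos rfl] at h
      rw [h, Matrix.smul_apply, smul_eq_mul, hnl]
    have hCX : C * Xb n0 = 0 := by
      have hXnl : Xb nl = T ^ (N - 1) * Xb n0 := by
        rw [hnl]; exact claim (N - 1) (Nat.sub_lt hN Nat.one_pos)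
      rw [hCdef, Matrix.sub_mul, Matrix.smul_mul, Matrix.mul_assoc, ← hXnl, ← he0, sub_self]
    have hX0 : Xb n0 = 0 := by
      calc Xb n0 = (Cinv * C) * Xb n0 := by rw [hCinvC, Matrix.one_mul]
        _ = Cinv * (C * Xb n0) := by rw [Matrix.mul_assoc]
        _ = 0 := by rw [hCX, Matrix.mul_zero]
    have hXall : ∀ i : Fin N, Xb i = 0 := by
      intro i
      have h := claim (i : ℕ) i.isLt
      rw [Fin.eta] at h
      rw [h, hX0, Matrix.mul_zero]
    funext p
    have : v p = Xb p.1 p.2 ⟨0, hJ⟩ := rfl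
    rw [this, hXall p.1]
    rfl
  have hPunit : IsUnit (Pmat N J hN A₀ M ε) := by
    rw [← Matrix.mulVec_injective_iff_isUnit]
    intro u w huw
    have h0 : Pmat N J hN A₀ M ε *ᵥ (u - w) = 0 := by
      rw [Matrix.mulVec_sub, huw, sub_self]
    exact sub_eq_zero.mp (hker _ h0)
  have hPdet : IsUnit (Pmat N J hN A₀ M ε).det := (Matrix.isUnit_iff_isUnit_det _).mp hPunit
  -- the rank-correction machinery
  set Y : Matrix (Fin N × Fin J) (Fin J) ℝ :=
    Matrix.of (fun (p : Fin N × Fin J) z => (T ^ ((p.1 : Fin N) : ℕ)) p.2 z) with hYdef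
  set b : Matrix (Fin J) (Fin N × Fin J) ℝ := (Emat N J nl)ᵀ with hbdef
  set a : Matrix (Fin N × Fin J) (Fin J) ℝ := Y * Cinv * M with hadef
  have hPinv : (Pmat N J hN A₀ M ε)⁻¹ * Pmat N J hN A₀ M ε = 1 :=
    Matrix.nonsing_inv_mul _ hPdet
  have hLP : Lmat N J A₀ M = Pmat N J hN A₀ M ε + ε • (Emat N J n0 * M * b) := by
    rw [hbdef, hn0, hnl, Pmat, sub_add_cancel]
  have hPiE : (Pmat N J hN A₀ M ε)⁻¹ * Emat N J n0 = Y * Cinv := by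
    have h1 := congrArg (fun Z => (Pmat N J hN A₀ M ε)⁻¹ * Z) hPY
    rw [← Matrix.mul_assoc, hPinv, Matrix.one_mul] at h1
    calc (Pmat N J hN A₀ M ε)⁻¹ * Emat N J n0
        = (Pmat N J hN A₀ M ε)⁻¹ * Emat N J n0 * (C * Cinv) := by
          rw [hCC, Matrix.mul_one]
      _ = (Pmat N J hN A₀ M ε)⁻¹ * (Emat N J n0 * C) * Cinv := by
          simp only [Matrix.mul_assoc]
      _ = Y * Cinv := by rw [← h1]
  have hPinvL : (Pmat N J hN A₀ M ε)⁻¹ * Lmat N J A₀ M = 1 + ε • (a * b) := by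
    rw [hLP, Matrix.mul_add, hPinv, Matrix.mul_smul]
    congr 1
    congr 1
    calc (Pmat N J hN A₀ M ε)⁻¹ * (Emat N J n0 * M * b)
        = (Pmat N J hN A₀ M ε)⁻¹ * Emat N J n0 * M * b := by simp only [Matrix.mul_assoc]
      _ = a * b := by rw [hPiE, hadef]
  -- structural lemmas for b
  have hbY : b * Y = T ^ (N - 1) := by
    ext z q
    rw [hbdef, Emat_transpose_mul]
    rfl
  have hbE : b * Emat N J nl = 1 := by
    ext z q
    rw [hbdef, Emat_transpose_mul]
    simp [Emat, Matrix.one_apply]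
  -- the small matrix b * a is conjugate to a positive diagonal matrix
  set dd : Fin J → ℝ := fun k => μ k ^ N * (1 - ε * μ k ^ N)⁻¹ with hdddef
  have hddpos : ∀ k, 0 < dd k := fun k => hdpos k
  have hT1 : T ^ (N - 1) = R⁻¹ * (Q * (Matrix.diagonal (fun k => μ k ^ (N - 1)) *
      (star Q * R))) := by
    rw [hTpow, hSpow]; simp only [Matrix.mul_assoc]
  have hTcj : T = R⁻¹ * (Q * (Matrix.diagonal μ * (star Q * R))) := by
    rw [hTc, hspec]; simp only [Matrix.mul_assoc]
  have hCinvM : Cinv * M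
      = (R⁻¹ * (Q * (Matrix.diagonal (fun k => (1 - ε * μ k ^ N)⁻¹) * (star Q * R)))) * T := by
    rw [hCinvdef, Matrix.mul_assoc, ← hTdef]
  have hba : b * a = R⁻¹ * (Q * (Matrix.diagonal dd * (star Q * R))) := by
    calc b * a = (b * Y) * (Cinv * M) := by rw [hadef]; simp only [Matrix.mul_assoc]
      _ = (R⁻¹ * (Q * (Matrix.diagonal (fun k => μ k ^ (N - 1)) * (star Q * R)))) *
          ((R⁻¹ * (Q * (Matrix.diagonal (fun k => (1 - ε * μ k ^ N)⁻¹) * (star Q * R)))) *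
            (R⁻¹ * (Q * (Matrix.diagonal μ * (star Q * R))))) := by
          rw [hbY, hCinvM, hT1, hTcj, Matrix.mul_assoc]
      _ = (R⁻¹ * (Q * (Matrix.diagonal (fun k => μ k ^ (N - 1)) * (star Q * R)))) *
          (R⁻¹ * (Q * (Matrix.diagonal (fun k => (1 - ε * μ k ^ N)⁻¹ * μ k) *
            (star Q * R)))) := by rw [conj_mul]
      _ = R⁻¹ * (Q * (Matrix.diagonal (fun k => μ k ^ (N - 1) *
            ((1 - ε * μ k ^ N)⁻¹ * μ k)) * (star Q * R))) := by rw [conj_mul]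
      _ = R⁻¹ * (Q * (Matrix.diagonal dd * (star Q * R))) := by
          have hfun : (fun k => μ k ^ (N - 1) * ((1 - ε * μ k ^ N)⁻¹ * μ k)) = dd := by
            funext k
            have hp : μ k ^ (N - 1) * μ k = μ k ^ N := by
              rw [← pow_succ, Nat.sub_add_cancel hN]
            show μ k ^ (N - 1) * ((1 - ε * μ k ^ N)⁻¹ * μ k) = μ k ^ N * (1 - ε * μ k ^ N)⁻¹
            rw [← hp]; ring
          rw [hfun]
  set U : Matrix (Fin J) (Fin J) ℝ := R⁻¹ * Q with hUdef
  set Ui : Matrix (Fin J) (Fin J) ℝ := star Q * R with hUidef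
  have hUUi : U * Ui = 1 := by
    rw [hUdef, hUidef, Matrix.mul_assoc, cQ, hRiR]
  have hUiU : Ui * U = 1 := by
    rw [hUdef, hUidef, Matrix.mul_assoc, cR, hQQ']
  have hGU : (b * a) * U = U * Matrix.diagonal dd := by
    rw [hba, hUdef]
    calc R⁻¹ * (Q * (Matrix.diagonal dd * (star Q * R))) * (R⁻¹ * Q)
        = R⁻¹ * (Q * (Matrix.diagonal dd * (star Q * (R * (R⁻¹ * Q))))) := by
          simp only [Matrix.mul_assoc]
      _ = R⁻¹ * (Q * (Matrix.diagonal dd * 1)) := by rw [cR, hQQ']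
      _ = R⁻¹ * Q * Matrix.diagonal dd := by
          rw [Matrix.mul_one]; simp only [Matrix.mul_assoc]
  have hΔΔi : Matrix.diagonal dd * Matrix.diagonal (fun k => (dd k)⁻¹) = 1 := by
    rw [Matrix.diagonal_mul_diagonal,
      show (fun k => dd k * (dd k)⁻¹) = fun _ : Fin J => (1:ℝ) from
        funext fun k => mul_inv_cancel₀ (hdpos k).ne', Matrix.diagonal_one]
  -- the eigenvector matrix V and its inverse
  set c : Matrix (Fin N × Fin J) (Fin J) ℝ := a * U - Emat N J nl with hcdef
  set V : Matrix (Fin N × Fin J) (Fin N × Fin J) ℝ := 1 + c * b with hVdef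
  set Wi : Matrix (Fin N × Fin J) (Fin N × Fin J) ℝ :=
    1 - c * ((Matrix.diagonal (fun k => (dd k)⁻¹) * Ui) * b) with hWidef
  set Dm : Matrix (Fin N × Fin J) (Fin N × Fin J) ℝ :=
    1 + Emat N J nl * ((ε • Matrix.diagonal dd) * b) with hDmdef
  have hbc : b * c = U * Matrix.diagonal dd - 1 := by
    rw [hcdef, Matrix.mul_sub, hbE, ← Matrix.mul_assoc, hGU]
  have hUDDU : (U * Matrix.diagonal dd) * (Matrix.diagonal (fun k => (dd k)⁻¹) * Ui) = 1 := by
    calc (U * Matrix.diagonal dd) * (Matrix.diagonal (fun k => (dd k)⁻¹) * Ui)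
        = U * ((Matrix.diagonal dd * Matrix.diagonal (fun k => (dd k)⁻¹)) * Ui) := by
          simp only [Matrix.mul_assoc]
      _ = 1 := by rw [hΔΔi, Matrix.one_mul, hUUi]
  have h3 : (U * Matrix.diagonal dd - 1) * ((Matrix.diagonal (fun k => (dd k)⁻¹) * Ui) * b)
      = b - (Matrix.diagonal (fun k => (dd k)⁻¹) * Ui) * b := by
    rw [Matrix.sub_mul, Matrix.one_mul, ← Matrix.mul_assoc, hUDDU, Matrix.one_mul]
  have hVW : V * Wi = 1 := by
    rw [hVdef, hWidef]
    have h4 : c * b * (c * ((Matrix.diagonal (fun k => (dd k)⁻¹) * Ui) * b))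
        = c * b - c * ((Matrix.diagonal (fun k => (dd k)⁻¹) * Ui) * b) := by
      calc c * b * (c * ((Matrix.diagonal (fun k => (dd k)⁻¹) * Ui) * b))
          = c * ((b * c) * ((Matrix.diagonal (fun k => (dd k)⁻¹) * Ui) * b)) := by
            simp only [Matrix.mul_assoc]
        _ = c * (b - (Matrix.diagonal (fun k => (dd k)⁻¹) * Ui) * b) := by rw [hbc, h3]
        _ = c * b - c * ((Matrix.diagonal (fun k => (dd k)⁻¹) * Ui) * b) := by
            rw [Matrix.mul_sub]
    rw [Matrix.mul_sub, Matrix.mul_one, Matrix.add_mul, Matrix.one_mul, h4]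
    abel
  have hVunit : IsUnit V := (Matrix.isUnit_iff_isUnit_det _).mpr (Matrix.isUnit_det_of_right_inverse hVW)
  have hVinv : V⁻¹ = Wi := Matrix.inv_eq_right_inv hVW
  have hbV : b * V = (U * Matrix.diagonal dd) * b := by
    rw [hVdef, Matrix.mul_add, Matrix.mul_one, ← Matrix.mul_assoc, hbc, Matrix.sub_mul,
      Matrix.one_mul]
    abel
  have hVE : V * Emat N J nl = Emat N J nl + c := by
    rw [hVdef, Matrix.add_mul, Matrix.one_mul, Matrix.mul_assoc, hbE, Matrix.mul_one]
  have hVD : (1 + ε • (a * b)) * V = V * Dm := by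
    have lhs : (1 + ε • (a * b)) * V = V + ε • (a * ((U * Matrix.diagonal dd) * b)) := by
      rw [Matrix.add_mul, Matrix.one_mul, smul_mul_assoc, Matrix.mul_assoc a b V, hbV]
    have rhs : V * Dm = V + (a * U) * ((ε • Matrix.diagonal dd) * b) := by
      rw [hDmdef, Matrix.mul_add, Matrix.mul_one, ← Matrix.mul_assoc V (Emat N J nl), hVE,
        hcdef, show Emat N J nl + (a * U - Emat N J nl) = a * U from by abel]
    rw [lhs, rhs]
    congr 1
    simp only [Matrix.smul_mul, Matrix.mul_smul, Matrix.mul_assoc]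
  -- entries of the diagonal matrix
  have hDmapply : ∀ p q : Fin N × Fin J,
      Dm p q = (if p = q then (if p.1 = nl then 1 + ε * dd p.2 else 1) else 0) := by
    intro p q
    rw [hDmdef, Matrix.add_apply, ← Matrix.mul_assoc, hbdef, Emat_mul_mul_transpose,
      Matrix.one_apply]
    by_cases hpq : p = q
    · subst hpq
      by_cases h1 : p.1 = nl
      · simp [h1, Matrix.diagonal_apply, smul_eq_mul]
      · simp [h1]
    · rw [if_neg hpq, if_neg hpq]
      by_cases h12 : p.1 = nl ∧ q.1 = nl
      · rw [if_pos h12, Matrix.smul_apply]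
        have h3 : ¬ p.2 = q.2 := fun h3 => hpq (Prod.ext (h12.1.trans h12.2.symm) h3)
        rw [Matrix.diagonal_apply, if_neg h3, smul_zero, add_zero]
      · rw [if_neg h12, add_zero]
  have hDmdiag : ∀ p : Fin N × Fin J,
      Dm p p = if p.1 = nl then 1 + ε * dd p.2 else 1 := fun p => by
    rw [hDmapply, if_pos rfl]
  have hgt : ∀ p : Fin N × Fin J, p.1 = nl → 1 < Dm p p := by
    intro p h1
    rw [hDmdiag, if_pos h1]
    nlinarith [mul_pos hε0 (hddpos p.2)]
  have heq1 : ∀ p : Fin N × Fin J, p.1 ≠ nl → Dm p p = 1 := by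
    intro p h1
    rw [hDmdiag, if_neg h1]
  refine ⟨V, Dm, hVunit, ?_, ?_, ?_, ?_, ?_⟩
  · intro p q hpq
    rw [hDmapply, if_neg hpq]
  · calc (Pmat N J hN A₀ M ε)⁻¹ * Lmat N J A₀ M = 1 + ε • (a * b) := hPinvL
      _ = (1 + ε • (a * b)) * (V * Wi) := by rw [hVW, Matrix.mul_one]
      _ = ((1 + ε • (a * b)) * V) * Wi := by rw [← Matrix.mul_assoc]
      _ = V * Dm * Wi := by rw [hVD]
      _ = V * Dm * V⁻¹ := by rw [hVinv]
  · have hset : (Finset.univ.filter fun p : Fin N × Fin J => Dm p p = 1)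
        = (Finset.univ.erase nl) ×ˢ Finset.univ := by
      ext p
      simp only [Finset.mem_filter, Finset.mem_univ, true_and, Finset.mem_product,
        Finset.mem_erase, and_true]
      constructor
      · intro h
        intro h1
        exact absurd (h ▸ hgt p h1) (lt_irrefl 1)
      · intro h1
        exact heq1 p h1
    rw [hset, Finset.card_product, Finset.card_erase_of_mem (Finset.mem_univ _)]
    simp [Finset.card_univ]
  · have hset : (Finset.univ.filter fun p : Fin N × Fin J => 1 < Dm p p)
        = ({nl} : Finset (Fin N)) ×ˢ Finset.univ := by
      ext p
      simp only [Finset.mem_filter, Finset.mem_univ, true_and, Finset.mem_product,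
        Finset.mem_singleton, and_true]
      constructor
      · intro h
        by_contra h1
        rw [heq1 p h1] at h
        exact lt_irrefl 1 h
      · intro h1
        exact hgt p h1
    rw [hset, Finset.card_product, Finset.card_singleton]
    simp [Finset.card_univ]
  · intro p
    by_cases h1 : p.1 = nl
    · exact Or.inr (hgt p h1)
    · exact Or.inl (heq1 p h1)
end

section
/- Let δ ∈ (0,1), set T := Nτ, c₀ := √(κ₂(M)), b_τ := δ√τ/(δ√τ + c₀√T), and take ε ∈ (0, b_τ]. Then for every integer k ≥ 0 and every vector r₀ ∈ ℝ^{NJ} there exists a real polynomial p with deg p ≤ k and p(0) = 1 such that ‖p(P_ε⁻¹L)·r₀‖₂ ≤ (2√δ/(1+δ))^k · ‖r₀‖₂. (Since the GMRES residual at iteration k for the preconditioned system P_ε⁻¹L u = P_ε⁻¹f equals the minimum of ‖p(P_ε⁻¹L)r₀‖₂ over all such polynomials, this is exactly the size-independent linear convergence bound ‖r_k‖₂ ≤ (2√δ/(1+δ))^k ‖r₀‖₂ of the GMRES method applied to the preconditioned system.) -/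
open Matrix

set_option linter.unusedSectionVars false
set_option linter.unusedVariables false
set_option maxHeartbeats 1000000

/-- The Euclidean norm of a real vector. -/
noncomputable def euclNorm {n : Type*} [Fintype n] (v : n → ℝ) : ℝ :=
  Real.sqrt (∑ i, v i ^ 2)

/-- The spectral norm (operator norm induced by the Euclidean vector norm) of a
real matrix. -/
noncomputable def matSpectralNorm {n : Type*} [Fintype n] [DecidableEq n]
    (A : Matrix n n ℝ) : ℝ :=
  ‖LinearMap.toContinuousLinearMap (Matrix.toEuclideanLin A)‖

/-! ### Euclidean norm basics -/

lemma euclNorm_eq {n : Type*} [Fintype n] (v : n → ℝ) :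
    euclNorm v = ‖(EuclideanSpace.equiv n ℝ).symm v‖ := by
  rw [euclNorm, EuclideanSpace.norm_eq]
  congr 1; apply Finset.sum_congr rfl; intro i _
  simp [Real.norm_eq_abs, sq_abs]

lemma euclNorm_nonneg {n : Type*} [Fintype n] (v : n → ℝ) : 0 ≤ euclNorm v :=
  Real.sqrt_nonneg _

lemma euclNorm_sq {n : Type*} [Fintype n] (v : n → ℝ) :
    euclNorm v ^ 2 = v ⬝ᵥ v := by
  rw [euclNorm, Real.sq_sqrt (by positivity), dotProduct]
  exact Finset.sum_congr rfl fun i _ => (sq (v i)).symm ▸ by ring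

lemma dot_le_euclNorm {n : Type*} [Fintype n] (x v : n → ℝ) :
    x ⬝ᵥ v ≤ euclNorm x * euclNorm v := by
  rw [euclNorm_eq, euclNorm_eq]
  have h := real_inner_le_norm ((EuclideanSpace.equiv n ℝ).symm x)
    ((EuclideanSpace.equiv n ℝ).symm v)
  refine le_trans (le_of_eq ?_) h
  simp [PiLp.inner_apply, dotProduct, RCLike.inner_apply, conj_trivial]
  exact Finset.sum_congr rfl fun i _ => mul_comm _ _

lemma matSpectralNorm_nonneg {n : Type*} [Fintype n] [DecidableEq n] (A : Matrix n n ℝ) :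
    0 ≤ matSpectralNorm A := norm_nonneg _

lemma euclNorm_mulVec_le {n : Type*} [Fintype n] [DecidableEq n] (A : Matrix n n ℝ)
    (v : n → ℝ) : euclNorm (A.mulVec v) ≤ matSpectralNorm A * euclNorm v := by
  rw [euclNorm_eq, euclNorm_eq, matSpectralNorm]
  have := (LinearMap.toContinuousLinearMap (Matrix.toEuclideanLin A)).le_opNorm
    ((EuclideanSpace.equiv n ℝ).symm v)
  convert this using 2 <;> rfl

lemma euclNorm_eq_zero {n : Type*} [Fintype n] {v : n → ℝ} (h : euclNorm v ≤ 0) :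
    v = 0 := by
  have h2 : euclNorm v = 0 := le_antisymm h (euclNorm_nonneg v)
  rw [euclNorm, Real.sqrt_eq_zero (by positivity)] at h2
  funext i
  have := (Finset.sum_eq_zero_iff_of_nonneg (fun i _ => sq_nonneg (v i))).mp h2 i
    (Finset.mem_univ i)
  exact pow_eq_zero_iff (n := 2) (by norm_num) |>.mp this

/-! ### M-inner-product machinery -/

section QF
variable {n : Type*} [Fintype n] [DecidableEq n]

lemma symm_dot {M : Matrix n n ℝ} (hs : Mᵀ = M) (x y : n → ℝ) :
    x ⬝ᵥ M *ᵥ y = y ⬝ᵥ M *ᵥ x := by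
  rw [dotProduct_mulVec, dotProduct_comm, ← mulVec_transpose, hs]

lemma posdef_symm {M : Matrix n n ℝ} (hM : M.PosDef) : Mᵀ = M := by
  have := hM.1
  rwa [Matrix.IsHermitian, conjTranspose_eq_transpose_of_trivial] at this

lemma qf_nonneg {M : Matrix n n ℝ} (hM : M.PosDef) (x : n → ℝ) :
    0 ≤ x ⬝ᵥ M *ᵥ x := by
  have := hM.posSemidef.dotProduct_mulVec_nonneg x
  simpa using this

lemma qf_cs {M : Matrix n n ℝ} (hM : M.PosDef) (x y : n → ℝ) :
    (x ⬝ᵥ M *ᵥ y)^2 ≤ (x ⬝ᵥ M *ᵥ x) * (y ⬝ᵥ M *ᵥ y) := by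
  have key : ∀ t : ℝ, 0 ≤ (x ⬝ᵥ M *ᵥ x) * (t*t) + (2 * (x ⬝ᵥ M *ᵥ y)) * t + (y ⬝ᵥ M *ᵥ y) := by
    intro t
    have h0 := qf_nonneg hM (t • x + y)
    have hexp : (t • x + y) ⬝ᵥ M *ᵥ (t • x + y)
        = (x ⬝ᵥ M *ᵥ x) * (t*t) + (2 * (x ⬝ᵥ M *ᵥ y)) * t + (y ⬝ᵥ M *ᵥ y) := by
      simp only [mulVec_add, mulVec_smul, dotProduct_add, add_dotProduct,
        smul_dotProduct, dotProduct_smul, smul_eq_mul, smul_mulVec]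
      rw [symm_dot (posdef_symm hM) y x]
      ring
    linarith [hexp ▸ h0]
  have hd := discrim_le_zero key
  rw [discrim] at hd
  nlinarith

lemma qf_cs' {M : Matrix n n ℝ} (hM : M.PosDef) (x y : n → ℝ) :
    x ⬝ᵥ M *ᵥ y ≤ Real.sqrt (x ⬝ᵥ M *ᵥ x) * Real.sqrt (y ⬝ᵥ M *ᵥ y) := by
  have h1 : x ⬝ᵥ M *ᵥ y ≤ |x ⬝ᵥ M *ᵥ y| := le_abs_self _
  have h2 : |x ⬝ᵥ M *ᵥ y| = Real.sqrt ((x ⬝ᵥ M *ᵥ y)^2) := (Real.sqrt_sq_eq_abs _).symm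
  rw [← Real.sqrt_mul (qf_nonneg hM x)]
  exact h1.trans (h2 ▸ Real.sqrt_le_sqrt (qf_cs hM x y))

lemma qf_step {M K : Matrix n n ℝ} (hM : M.PosDef) (hK : K.PosDef) {τ : ℝ} (hτ : 0 < τ)
    {z x : n → ℝ} (h : (M + τ • K) *ᵥ z = M *ᵥ x) :
    Real.sqrt (z ⬝ᵥ M *ᵥ z) ≤ Real.sqrt (x ⬝ᵥ M *ᵥ x) := by
  have hz : z ⬝ᵥ M *ᵥ z ≤ z ⬝ᵥ M *ᵥ x := by
    have : z ⬝ᵥ (M + τ • K) *ᵥ z = z ⬝ᵥ M *ᵥ x := by rw [h]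
    rw [add_mulVec, dotProduct_add, smul_mulVec, dotProduct_smul, smul_eq_mul] at this
    nlinarith [qf_nonneg hK z]
  have hcs := qf_cs' hM z x
  set a := Real.sqrt (z ⬝ᵥ M *ᵥ z) with ha
  set b := Real.sqrt (x ⬝ᵥ M *ᵥ x)
  have haq : a^2 = z ⬝ᵥ M *ᵥ z := Real.sq_sqrt (qf_nonneg hM z)
  have han : 0 ≤ a := Real.sqrt_nonneg _
  have hbn : 0 ≤ b := Real.sqrt_nonneg _
  rcases eq_or_lt_of_le han with h0 | h0
  · rw [← h0]; exact hbn
  · have h2 : a * a ≤ a * b := by nlinarith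
    exact le_of_mul_le_mul_left h2 h0

lemma sqrt_qf_le {M : Matrix n n ℝ} (hM : M.PosDef) (x : n → ℝ) :
    Real.sqrt (x ⬝ᵥ M *ᵥ x) ≤ Real.sqrt (matSpectralNorm M) * euclNorm x := by
  have h1 : x ⬝ᵥ M *ᵥ x ≤ matSpectralNorm M * euclNorm x ^ 2 := by
    calc x ⬝ᵥ M *ᵥ x ≤ euclNorm x * euclNorm (M *ᵥ x) := dot_le_euclNorm _ _
    _ ≤ euclNorm x * (matSpectralNorm M * euclNorm x) :=
        mul_le_mul_of_nonneg_left (euclNorm_mulVec_le M x) (euclNorm_nonneg x)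
    _ = matSpectralNorm M * euclNorm x ^ 2 := by ring
  calc Real.sqrt (x ⬝ᵥ M *ᵥ x) ≤ Real.sqrt (matSpectralNorm M * euclNorm x ^ 2) :=
      Real.sqrt_le_sqrt h1
  _ = Real.sqrt (matSpectralNorm M) * euclNorm x := by
      rw [Real.sqrt_mul (matSpectralNorm_nonneg M), Real.sqrt_sq (euclNorm_nonneg x)]

lemma euclNorm_le_sqrt_qf {M : Matrix n n ℝ} (hM : M.PosDef) (x : n → ℝ) :
    euclNorm x ≤ Real.sqrt (matSpectralNorm M⁻¹) * Real.sqrt (x ⬝ᵥ M *ᵥ x) := by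
  have hdet : IsUnit M.det := isUnit_iff_ne_zero.mpr hM.det_pos.ne'
  have hMM : M * M⁻¹ = 1 := Matrix.mul_nonsing_inv M hdet
  have e1 : euclNorm x ^ 2 = x ⬝ᵥ M *ᵥ (M⁻¹ *ᵥ x) := by
    rw [euclNorm_sq, mulVec_mulVec, hMM, one_mulVec]
  have e2 := qf_cs' hM x (M⁻¹ *ᵥ x)
  have e3 : (M⁻¹ *ᵥ x) ⬝ᵥ M *ᵥ (M⁻¹ *ᵥ x) ≤ matSpectralNorm M⁻¹ * euclNorm x ^ 2 := by
    have h4 : (M⁻¹ *ᵥ x) ⬝ᵥ M *ᵥ (M⁻¹ *ᵥ x) = (M⁻¹ *ᵥ x) ⬝ᵥ x := by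
      rw [mulVec_mulVec, hMM, one_mulVec]
    rw [h4]
    calc (M⁻¹ *ᵥ x) ⬝ᵥ x ≤ euclNorm (M⁻¹ *ᵥ x) * euclNorm x := dot_le_euclNorm _ _
    _ ≤ matSpectralNorm M⁻¹ * euclNorm x * euclNorm x :=
        mul_le_mul_of_nonneg_right (euclNorm_mulVec_le _ _) (euclNorm_nonneg x)
    _ = matSpectralNorm M⁻¹ * euclNorm x ^ 2 := by ring
  have e4 : Real.sqrt ((M⁻¹ *ᵥ x) ⬝ᵥ M *ᵥ (M⁻¹ *ᵥ x))
      ≤ Real.sqrt (matSpectralNorm M⁻¹) * euclNorm x := by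
    calc Real.sqrt ((M⁻¹ *ᵥ x) ⬝ᵥ M *ᵥ (M⁻¹ *ᵥ x))
        ≤ Real.sqrt (matSpectralNorm M⁻¹ * euclNorm x ^ 2) := Real.sqrt_le_sqrt e3
    _ = Real.sqrt (matSpectralNorm M⁻¹) * euclNorm x := by
        rw [Real.sqrt_mul (matSpectralNorm_nonneg _), Real.sqrt_sq (euclNorm_nonneg x)]
  have key : euclNorm x ^ 2 ≤
      Real.sqrt (x ⬝ᵥ M *ᵥ x) * (Real.sqrt (matSpectralNorm M⁻¹) * euclNorm x) := by
    rw [e1]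
    exact e2.trans (mul_le_mul_of_nonneg_left e4 (Real.sqrt_nonneg _))
  rcases eq_or_lt_of_le (euclNorm_nonneg x) with h0 | h0
  · rw [← h0]; positivity
  · have h5 := key
    rw [sq] at h5
    have h2 : euclNorm x * euclNorm x ≤
        (Real.sqrt (matSpectralNorm M⁻¹) * Real.sqrt (x ⬝ᵥ M *ᵥ x)) * euclNorm x := by
      nlinarith
    exact le_of_mul_le_mul_right h2 h0
end QF

/-! ### Block structure -/

def ub {N J : ℕ} (u : Fin N × Fin J → ℝ) (i : Fin N) : Fin J → ℝ := fun j => u (i, j)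

lemma euclNorm_blocks {N J : ℕ} (u : Fin N × Fin J → ℝ) :
    euclNorm u ^ 2 = ∑ i : Fin N, euclNorm (ub u i) ^ 2 := by
  rw [euclNorm, Real.sq_sqrt (by positivity), Fintype.sum_prod_type]
  apply Finset.sum_congr rfl
  intro i _
  rw [euclNorm, Real.sq_sqrt (by positivity)]
  rfl

lemma ub_euclNorm_le {N J : ℕ} (u : Fin N × Fin J → ℝ) (i : Fin N) :
    euclNorm (ub u i) ≤ euclNorm u := by
  rw [euclNorm, euclNorm]
  apply Real.sqrt_le_sqrt
  rw [Fintype.sum_prod_type]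
  exact Finset.single_le_sum (f := fun i' => ∑ j, u (i', j) ^ 2)
    (fun i' _ => by positivity) (Finset.mem_univ i)

lemma Lmat_mulVec {N J : ℕ} (A₀ M : Matrix (Fin J) (Fin J) ℝ)
    (u : Fin N × Fin J → ℝ) (i : Fin N) (j : Fin J) :
    (Lmat N J A₀ M).mulVec u (i, j) =
      A₀.mulVec (ub u i) j
        + ∑ i' : Fin N, (if (i:ℕ) = (i':ℕ) + 1 then -(M.mulVec (ub u i') j) else 0) := by
  rw [Matrix.mulVec, dotProduct, Fintype.sum_prod_type]
  have key : ∀ i'' : Fin N, (∑ j' : Fin J, Lmat N J A₀ M (i,j) (i'',j') * u (i'',j'))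
      = (if i = i'' then A₀.mulVec (ub u i'') j
         else if (i:ℕ)=(i'':ℕ)+1 then -(M.mulVec (ub u i'') j) else 0) := by
    intro i''
    by_cases h1 : i = i''
    · simp [Lmat, h1, Matrix.mulVec, dotProduct, ub]
    · by_cases h2 : (i:ℕ) = (i'':ℕ)+1
      · simp [Lmat, h1, h2, Matrix.mulVec, dotProduct, ub, neg_mul, Finset.sum_neg_distrib]
      · simp [Lmat, h1, h2]
  rw [Finset.sum_congr rfl (fun i'' _ => key i'')]
  have split : ∀ i'' : Fin N,
      (if i = i'' then A₀.mulVec (ub u i'') j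
        else if (i:ℕ)=(i'':ℕ)+1 then -(M.mulVec (ub u i'') j) else 0)
      = (if i = i'' then A₀.mulVec (ub u i'') j else 0)
        + (if (i:ℕ)=(i'':ℕ)+1 then -(M.mulVec (ub u i'') j) else 0) := by
    intro i''
    by_cases h1 : i = i''
    · have h2 : ¬ ((i:ℕ) = (i'':ℕ)+1) := by subst h1; omega
      simp [h1, h2]
    · simp [h1]
  rw [Finset.sum_congr rfl (fun i'' _ => split i''), Finset.sum_add_distrib,
    Finset.sum_ite_eq]
  simp

lemma Lmat_mulVec_zero {N J : ℕ} (A₀ M : Matrix (Fin J) (Fin J) ℝ)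
    (u : Fin N × Fin J → ℝ) (i : Fin N) (hi : (i:ℕ) = 0) (j : Fin J) :
    (Lmat N J A₀ M).mulVec u (i, j) = A₀.mulVec (ub u i) j := by
  rw [Lmat_mulVec]
  have h : ∀ i' : Fin N, (if (i:ℕ) = (i':ℕ) + 1 then -(M.mulVec (ub u i') j) else 0) = 0 := by
    intro i'; rw [if_neg]; omega
  rw [Finset.sum_congr rfl (fun i' _ => h i'), Finset.sum_const_zero, add_zero]

lemma Lmat_mulVec_succ {N J : ℕ} (A₀ M : Matrix (Fin J) (Fin J) ℝ)
    (u : Fin N × Fin J → ℝ) (i i' : Fin N) (hi : (i:ℕ) = (i':ℕ) + 1) (j : Fin J) :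
    (Lmat N J A₀ M).mulVec u (i, j) = A₀.mulVec (ub u i) j - M.mulVec (ub u i') j := by
  rw [Lmat_mulVec]
  rw [Finset.sum_eq_single i' (fun b _ hb => by rw [if_neg]; intro hc; exact hb (by
    apply Fin.ext; omega)) (fun h => absurd (Finset.mem_univ i') h)]
  rw [if_pos hi]; ring

lemma EME_apply {N J : ℕ} (M : Matrix (Fin J) (Fin J) ℝ) (a b : Fin N)
    (p q : Fin N × Fin J) :
    (Emat N J a * M * (Emat N J b)ᵀ) p q
      = if p.1 = a ∧ q.1 = b then M p.2 q.2 else 0 := by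
  simp only [Emat, Matrix.mul_apply, Matrix.transpose_apply, Matrix.of_apply, ite_and,
    mul_ite, ite_mul, one_mul, mul_one, zero_mul, mul_zero,
    Finset.sum_ite_eq, Finset.sum_ite_eq', Finset.mem_univ, if_true]
  by_cases h1 : p.1 = a <;> by_cases h2 : q.1 = b <;> simp [h1, h2]

lemma EME_mulVec {N J : ℕ} (M : Matrix (Fin J) (Fin J) ℝ) (a b : Fin N)
    (w : Fin N × Fin J → ℝ) (i : Fin N) (j : Fin J) :
    ((Emat N J a * M * (Emat N J b)ᵀ).mulVec w) (i, j)
      = if i = a then M.mulVec (ub w b) j else 0 := by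
  rw [Matrix.mulVec, dotProduct, Fintype.sum_prod_type]
  have key : ∀ i' : Fin N, (∑ j' : Fin J,
      (Emat N J a * M * (Emat N J b)ᵀ) (i,j) (i',j') * w (i',j'))
      = if i = a ∧ i' = b then M.mulVec (ub w b) j else 0 := by
    intro i'
    by_cases h : i = a ∧ i' = b
    · simp [EME_apply, h.1, h.2, Matrix.mulVec, dotProduct, ub]
    · rw [if_neg h]
      apply Finset.sum_eq_zero; intro j' _
      rw [EME_apply, if_neg (by tauto), zero_mul]
  rw [Finset.sum_congr rfl (fun i' _ => key i')]
  by_cases h : i = a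
  · simp only [h, true_and, Finset.sum_ite_eq', Finset.mem_univ, if_true]
  · simp only [h, false_and, if_false, Finset.sum_const_zero]

/-! ### The energy estimate -/

lemma energy_estimate {N J : ℕ} (hN : 0 < N) {M K : Matrix (Fin J) (Fin J) ℝ}
    (hM : M.PosDef) (hK : K.PosDef) {τ : ℝ} (hτ : 0 < τ)
    {ε : ℝ} (hε0 : 0 < ε) (hε1 : ε < 1)
    (u w : Fin N × Fin J → ℝ)
    (H0 : (M + τ • K) *ᵥ ub u ⟨0, hN⟩
        = ε • (M *ᵥ ub u ⟨N-1, Nat.sub_lt hN Nat.one_pos⟩)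
          + ε • (M *ᵥ ub w ⟨N-1, Nat.sub_lt hN Nat.one_pos⟩))
    (HS : ∀ (k : ℕ) (hk : k + 1 < N),
        (M + τ • K) *ᵥ ub u ⟨k+1, hk⟩ = M *ᵥ ub u ⟨k, Nat.lt_of_succ_lt hk⟩) :
    euclNorm u ≤ (ε / (1-ε)) * Real.sqrt N * Real.sqrt (matSpectralNorm M)
        * Real.sqrt (matSpectralNorm M⁻¹) * euclNorm w := by
  set i0 : Fin N := ⟨0, hN⟩
  set lst : Fin N := ⟨N-1, Nat.sub_lt hN Nat.one_pos⟩
  set a : Fin N → ℝ := fun i => Real.sqrt (ub u i ⬝ᵥ M *ᵥ ub u i) with ha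
  have han : ∀ i, 0 ≤ a i := fun i => Real.sqrt_nonneg _
  have claim : ∀ i, a i ≤ a i0 := by
    intro ⟨k, hk⟩
    induction k with
    | zero => exact le_of_eq rfl
    | succ m ih =>
        exact (qf_step hM hK hτ (HS m hk)).trans (ih (Nat.lt_of_succ_lt hk))
  set c : ℝ := Real.sqrt (ub w lst ⬝ᵥ M *ᵥ ub w lst) with hc
  have hcn : 0 ≤ c := Real.sqrt_nonneg _
  -- first block inequality
  have h1 : a i0 ^ 2 ≤ ε * (a i0 * a i0) + ε * (a i0 * c) := by
    have hq : ub u i0 ⬝ᵥ M *ᵥ ub u i0 ≤ ub u i0 ⬝ᵥ (M + τ • K) *ᵥ ub u i0 := by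
      rw [add_mulVec, dotProduct_add, smul_mulVec, dotProduct_smul, smul_eq_mul]
      nlinarith [qf_nonneg hK (ub u i0)]
    have hrhs : ub u i0 ⬝ᵥ (M + τ • K) *ᵥ ub u i0
        = ε * (ub u i0 ⬝ᵥ M *ᵥ ub u lst) + ε * (ub u i0 ⬝ᵥ M *ᵥ ub w lst) := by
      rw [H0, dotProduct_add, dotProduct_smul, dotProduct_smul, smul_eq_mul, smul_eq_mul]
    have hcs1 : ub u i0 ⬝ᵥ M *ᵥ ub u lst ≤ a i0 * a lst := qf_cs' hM _ _
    have hcs2 : ub u i0 ⬝ᵥ M *ᵥ ub w lst ≤ a i0 * c := qf_cs' hM _ _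
    have hsq : a i0 ^ 2 = ub u i0 ⬝ᵥ M *ᵥ ub u i0 := Real.sq_sqrt (qf_nonneg hM _)
    have hl : a lst ≤ a i0 := claim lst
    have e1 : ε * (ub u i0 ⬝ᵥ M *ᵥ ub u lst) ≤ ε * (a i0 * a lst) :=
      mul_le_mul_of_nonneg_left hcs1 hε0.le
    have e2 : ε * (ub u i0 ⬝ᵥ M *ᵥ ub w lst) ≤ ε * (a i0 * c) :=
      mul_le_mul_of_nonneg_left hcs2 hε0.le
    have e3 : ε * (a i0 * a lst) ≤ ε * (a i0 * a i0) := by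
      have := mul_le_mul_of_nonneg_left hl (han i0)
      nlinarith
    linarith
  have h2 : a i0 ≤ ε * c / (1 - ε) := by
    rcases eq_or_lt_of_le (han i0) with h0 | h0
    · rw [← h0]
      apply div_nonneg (mul_nonneg hε0.le hcn) (by linarith)
    · have h3 : a i0 * (1 - ε) ≤ ε * c := by nlinarith
      rw [le_div_iff₀ (by linarith : (0:ℝ) < 1 - ε)]
      linarith
  -- per-block norm bound
  have h3 : ∀ i, euclNorm (ub u i) ≤ Real.sqrt (matSpectralNorm M⁻¹) * a i0 := by
    intro i
    exact (euclNorm_le_sqrt_qf hM (ub u i)).trans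
      (mul_le_mul_of_nonneg_left (claim i) (Real.sqrt_nonneg _))
  have h4 : euclNorm u ≤ Real.sqrt N * (Real.sqrt (matSpectralNorm M⁻¹) * a i0) := by
    have hsum : euclNorm u ^ 2 ≤ N * (Real.sqrt (matSpectralNorm M⁻¹) * a i0) ^ 2 := by
      rw [euclNorm_blocks]
      calc ∑ i : Fin N, euclNorm (ub u i) ^ 2
          ≤ ∑ i : Fin N, (Real.sqrt (matSpectralNorm M⁻¹) * a i0) ^ 2 :=
            Finset.sum_le_sum (fun i _ =>
              pow_le_pow_left₀ (euclNorm_nonneg _) (h3 i) 2)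
      _ = N * (Real.sqrt (matSpectralNorm M⁻¹) * a i0) ^ 2 := by
            rw [Finset.sum_const, Finset.card_univ, Fintype.card_fin, nsmul_eq_mul]
    have := Real.sqrt_le_sqrt hsum
    rw [Real.sqrt_sq (euclNorm_nonneg u), Real.sqrt_mul (by positivity),
      Real.sqrt_sq (by positivity)] at this
    exact this
  have h5 : c ≤ Real.sqrt (matSpectralNorm M) * euclNorm w :=
    (sqrt_qf_le hM (ub w lst)).trans
      (mul_le_mul_of_nonneg_left (ub_euclNorm_le w lst) (Real.sqrt_nonneg _))
  -- combine
  have hεd : 0 ≤ ε / (1 - ε) := div_nonneg hε0.le (by linarith)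
  calc euclNorm u ≤ Real.sqrt N * (Real.sqrt (matSpectralNorm M⁻¹) * a i0) := h4
  _ ≤ Real.sqrt N * (Real.sqrt (matSpectralNorm M⁻¹) * (ε * c / (1 - ε))) := by
      apply mul_le_mul_of_nonneg_left _ (Real.sqrt_nonneg _)
      exact mul_le_mul_of_nonneg_left h2 (Real.sqrt_nonneg _)
  _ ≤ Real.sqrt N * (Real.sqrt (matSpectralNorm M⁻¹)
        * (ε * (Real.sqrt (matSpectralNorm M) * euclNorm w) / (1 - ε))) := by
      apply mul_le_mul_of_nonneg_left _ (Real.sqrt_nonneg _)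
      apply mul_le_mul_of_nonneg_left _ (Real.sqrt_nonneg _)
      exact div_le_div_of_nonneg_right (mul_le_mul_of_nonneg_left h5 hε0.le) (by linarith)
  _ = (ε / (1-ε)) * Real.sqrt N * Real.sqrt (matSpectralNorm M)
        * Real.sqrt (matSpectralNorm M⁻¹) * euclNorm w := by ring

/-! ### Extraction of block equations -/

lemma row_zero {N J : ℕ} (hN : 0 < N) (A₀ M : Matrix (Fin J) (Fin J) ℝ) (ε : ℝ)
    (u w : Fin N × Fin J → ℝ)
    (h : (Pmat N J hN A₀ M ε).mulVec u
      = ε • ((Emat N J ⟨0, hN⟩ * M * (Emat N J ⟨N - 1, Nat.sub_lt hN Nat.one_pos⟩)ᵀ).mulVec w)) :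
    A₀ *ᵥ ub u ⟨0, hN⟩
      = ε • (M *ᵥ ub u ⟨N-1, Nat.sub_lt hN Nat.one_pos⟩)
        + ε • (M *ᵥ ub w ⟨N-1, Nat.sub_lt hN Nat.one_pos⟩) := by
  funext j
  have hj := congrFun h (⟨0, hN⟩, j)
  rw [Pmat, sub_mulVec, smul_mulVec] at hj
  simp only [Pi.sub_apply, Pi.smul_apply, smul_eq_mul] at hj
  rw [Lmat_mulVec_zero A₀ M u ⟨0, hN⟩ rfl j, EME_mulVec, EME_mulVec, if_pos rfl, if_pos rfl]
    at hj
  simp only [Pi.add_apply, Pi.smul_apply, smul_eq_mul]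
  linarith

lemma row_succ {N J : ℕ} (hN : 0 < N) (A₀ M : Matrix (Fin J) (Fin J) ℝ) (ε : ℝ)
    (u w : Fin N × Fin J → ℝ)
    (h : (Pmat N J hN A₀ M ε).mulVec u
      = ε • ((Emat N J ⟨0, hN⟩ * M * (Emat N J ⟨N - 1, Nat.sub_lt hN Nat.one_pos⟩)ᵀ).mulVec w))
    (k : ℕ) (hk : k + 1 < N) :
    A₀ *ᵥ ub u ⟨k+1, hk⟩ = M *ᵥ ub u ⟨k, Nat.lt_of_succ_lt hk⟩ := by
  funext j
  have hj := congrFun h (⟨k+1, hk⟩, j)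
  rw [Pmat, sub_mulVec, smul_mulVec] at hj
  simp only [Pi.sub_apply, Pi.smul_apply, smul_eq_mul] at hj
  have hne : (⟨k+1, hk⟩ : Fin N) ≠ ⟨0, hN⟩ := by
    intro hc; exact Nat.succ_ne_zero k (by simpa using congrArg Fin.val hc)
  rw [Lmat_mulVec_succ A₀ M u ⟨k+1, hk⟩ ⟨k, Nat.lt_of_succ_lt hk⟩ rfl j,
    EME_mulVec, EME_mulVec, if_neg hne, if_neg hne] at hj
  simp only [mul_zero, sub_zero] at hj
  linarith

/-! ### Invertibility of the preconditioner -/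

lemma Pmat_det_isUnit {N J : ℕ} (hN : 0 < N) {M K : Matrix (Fin J) (Fin J) ℝ}
    (hM : M.PosDef) (hK : K.PosDef) {τ : ℝ} (hτ : 0 < τ)
    {ε : ℝ} (hε0 : 0 < ε) (hε1 : ε < 1) :
    IsUnit (Pmat N J hN (M + τ • K) M ε).det := by
  rw [isUnit_iff_ne_zero]
  intro hdet
  obtain ⟨v, hv0, hv⟩ := (Matrix.exists_mulVec_eq_zero_iff).mpr hdet
  have h : (Pmat N J hN (M + τ • K) M ε).mulVec v
      = ε • ((Emat N J ⟨0, hN⟩ * M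
          * (Emat N J ⟨N - 1, Nat.sub_lt hN Nat.one_pos⟩)ᵀ).mulVec (0 : Fin N × Fin J → ℝ)) := by
    rw [hv, Matrix.mulVec_zero, smul_zero]
  have H0 := row_zero hN (M + τ • K) M ε v 0 h
  have HS := row_succ hN (M + τ • K) M ε v 0 h
  have hb : ub (0 : Fin N × Fin J → ℝ) ⟨N-1, Nat.sub_lt hN Nat.one_pos⟩ = 0 := rfl
  have henergy := energy_estimate hN hM hK hτ hε0 hε1 v 0 H0 HS
  have hz : euclNorm (0 : Fin N × Fin J → ℝ) = 0 := by
    simp [euclNorm]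
  rw [hz, mul_zero] at henergy
  exact hv0 (euclNorm_eq_zero henergy)

/-! ### Auxiliary facts for the main theorem -/

lemma matSpectralNorm_pos {n : Type*} [Fintype n] [DecidableEq n] [Nonempty n]
    {M : Matrix n n ℝ} (hM : M.PosDef) : 0 < matSpectralNorm M := by
  obtain ⟨j⟩ := ‹Nonempty n›
  set x : n → ℝ := Pi.single j 1 with hx
  have hxne : x ≠ 0 := by
    intro hc
    have := congrFun hc j
    simp [hx] at this
  have hQ : 0 < x ⬝ᵥ M *ᵥ x := by
    have := hM.dotProduct_mulVec_pos hxne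
    simpa using this
  by_contra hcon
  push_neg at hcon
  have h1 := sqrt_qf_le hM x
  have h2 : Real.sqrt (matSpectralNorm M) = 0 := by
    rw [Real.sqrt_eq_zero']
    exact hcon
  rw [h2, zero_mul] at h1
  exact absurd h1 (not_le.mpr (Real.sqrt_pos.mpr hQ))

lemma euclNorm_sign_smul {n : Type*} [Fintype n] (k : ℕ) (v : n → ℝ) :
    euclNorm (((-1 : ℝ) ^ k) • v) = euclNorm v := by
  rw [euclNorm, euclNorm]
  congr 1
  apply Finset.sum_congr rfl
  intro i _
  have : ((-1 : ℝ) ^ k) ^ 2 = 1 := by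
    rw [← pow_mul, mul_comm, pow_mul]
    norm_num
  simp only [Pi.smul_apply, smul_eq_mul, mul_pow, this, one_mul]

/-! ### Main theorem -/

/-- Let `δ ∈ (0,1)`, `T = Nτ`, `c₀ = √(κ₂(M))`,
`b_τ = δ√τ/(δ√τ + c₀√T)` and `ε ∈ (0, b_τ]`.  Then for every `k ≥ 0` and every
`r₀ ∈ ℝ^{NJ}` there is a real polynomial `p` with `deg p ≤ k` and `p(0) = 1`
such that `‖p(P_ε⁻¹L) r₀‖₂ ≤ (2√δ/(1+δ))^k ‖r₀‖₂`; since the GMRES residual at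
iteration `k` equals the minimum of `‖p(P_ε⁻¹L) r₀‖₂` over such polynomials,
this is the size-independent linear convergence bound
`‖r_k‖₂ ≤ (2√δ/(1+δ))^k ‖r₀‖₂` for GMRES applied to `P_ε⁻¹L u = P_ε⁻¹f`. -/
theorem statement16 (N J : ℕ) (hN : 0 < N) (hJ : 0 < J) (τ : ℝ) (hτ : 0 < τ)
    (M K : Matrix (Fin J) (Fin J) ℝ) (hM : M.PosDef) (hK : K.PosDef)
    (A₀ : Matrix (Fin J) (Fin J) ℝ) (hA₀ : A₀ = M + τ • K)
    (δ : ℝ) (hδ0 : 0 < δ) (hδ1 : δ < 1)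
    (T c₀ bτ : ℝ) (hT : T = N * τ)
    (hc₀ : c₀ = Real.sqrt (matSpectralNorm M * matSpectralNorm M⁻¹))
    (hbτ : bτ = δ * Real.sqrt τ / (δ * Real.sqrt τ + c₀ * Real.sqrt T))
    (ε : ℝ) (hε0 : 0 < ε) (hεb : ε ≤ bτ) :
    ∀ (k : ℕ) (r₀ : Fin N × Fin J → ℝ),
      ∃ p : Polynomial ℝ, p.natDegree ≤ k ∧ p.eval 0 = 1 ∧
        euclNorm
            ((Polynomial.aeval
              ((Pmat N J hN A₀ M ε)⁻¹ * Lmat N J A₀ M) p).mulVec r₀) ≤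
          (2 * Real.sqrt δ / (1 + δ)) ^ k * euclNorm r₀ := by
  subst hA₀
  intro k r₀
  haveI : Nonempty (Fin J) := ⟨⟨0, hJ⟩⟩
  -- positivity of the various constants
  have hMpos : 0 < matSpectralNorm M := matSpectralNorm_pos hM
  have hMinvpos : 0 < matSpectralNorm M⁻¹ := matSpectralNorm_pos hM.inv
  have hc₀pos : 0 < c₀ := hc₀ ▸ Real.sqrt_pos.mpr (mul_pos hMpos hMinvpos)
  have hsτ : 0 < Real.sqrt τ := Real.sqrt_pos.mpr hτ
  have hTpos : 0 < T := hT ▸ mul_pos (by exact_mod_cast hN) hτ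
  have hsT : 0 < Real.sqrt T := Real.sqrt_pos.mpr hTpos
  have hbτlt : bτ < 1 := by
    rw [hbτ, div_lt_one (by positivity)]
    nlinarith
  have hε1 : ε < 1 := lt_of_le_of_lt hεb hbτlt
  -- key arithmetic consequence of ε ≤ bτ
  have hkey : ε * (c₀ * Real.sqrt N) ≤ δ * (1 - ε) := by
    have h1 : ε * (δ * Real.sqrt τ + c₀ * Real.sqrt T) ≤ δ * Real.sqrt τ := by
      have := hεb
      rw [hbτ, le_div_iff₀ (by positivity)] at this
      linarith
    have hsTeq : Real.sqrt T = Real.sqrt N * Real.sqrt τ := by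
      rw [hT, Real.sqrt_mul (by positivity)]
    rw [hsTeq] at h1
    have h2 : ε * (c₀ * Real.sqrt N) * Real.sqrt τ ≤ δ * (1 - ε) * Real.sqrt τ := by
      nlinarith
    exact le_of_mul_le_mul_right h2 hsτ
  have hcoef : (ε / (1 - ε)) * Real.sqrt N * Real.sqrt (matSpectralNorm M)
      * Real.sqrt (matSpectralNorm M⁻¹) ≤ δ := by
    have hc₀eq : c₀ = Real.sqrt (matSpectralNorm M) * Real.sqrt (matSpectralNorm M⁻¹) := by
      rw [hc₀, Real.sqrt_mul hMpos.le]
    rw [div_mul_eq_mul_div, div_mul_eq_mul_div, div_mul_eq_mul_div,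
      div_le_iff₀ (by linarith : (0:ℝ) < 1 - ε)]
    calc ε * Real.sqrt N * Real.sqrt (matSpectralNorm M) * Real.sqrt (matSpectralNorm M⁻¹)
        = ε * (c₀ * Real.sqrt N) := by rw [hc₀eq]; ring
    _ ≤ δ * (1 - ε) := hkey
  -- invertibility and the basic algebraic identity
  set C : Matrix (Fin N × Fin J) (Fin N × Fin J) ℝ :=
    Emat N J ⟨0, hN⟩ * M * (Emat N J ⟨N - 1, Nat.sub_lt hN Nat.one_pos⟩)ᵀ with hC
  set P : Matrix (Fin N × Fin J) (Fin N × Fin J) ℝ := Pmat N J hN (M + τ • K) M ε with hP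
  set L : Matrix (Fin N × Fin J) (Fin N × Fin J) ℝ := Lmat N J (M + τ • K) M with hL
  have hdet : IsUnit P.det := Pmat_det_isUnit hN hM hK hτ hε0 hε1
  set B : Matrix (Fin N × Fin J) (Fin N × Fin J) ℝ := ε • (P⁻¹ * C) with hB
  have hLPC : L = P + ε • C := by
    rw [hP, Pmat, sub_add_cancel]
  have hPL : P⁻¹ * L = 1 + B := by
    rw [hLPC, Matrix.mul_add, Matrix.nonsing_inv_mul _ hdet, Matrix.mul_smul, hB]
  -- the operator bound
  have hBound : ∀ v, euclNorm (B.mulVec v) ≤ δ * euclNorm v := by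
    intro v
    set u : Fin N × Fin J → ℝ := B.mulVec v with hu
    have hPu : P.mulVec u = ε • (C.mulVec v) := by
      rw [hu, hB, Matrix.mulVec_mulVec, Matrix.mul_smul,
        Matrix.mul_nonsing_inv_cancel_left _ _ hdet, Matrix.smul_mulVec]
    have hPu' : (Pmat N J hN (M + τ • K) M ε).mulVec u
        = ε • ((Emat N J ⟨0, hN⟩ * M
            * (Emat N J ⟨N - 1, Nat.sub_lt hN Nat.one_pos⟩)ᵀ).mulVec v) := hPu
    have H0 := row_zero hN (M + τ • K) M ε u v hPu'
    have HS := row_succ hN (M + τ • K) M ε u v hPu'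
    have henergy := energy_estimate hN hM hK hτ hε0 hε1 u v H0 HS
    calc euclNorm u ≤ (ε / (1-ε)) * Real.sqrt N * Real.sqrt (matSpectralNorm M)
        * Real.sqrt (matSpectralNorm M⁻¹) * euclNorm v := henergy
    _ ≤ δ * euclNorm v := mul_le_mul_of_nonneg_right hcoef (euclNorm_nonneg v)
  -- powers
  have hpow : ∀ m : ℕ, euclNorm ((B ^ m).mulVec r₀) ≤ δ ^ m * euclNorm r₀ := by
    intro m
    induction m with
    | zero => simp [Matrix.one_mulVec]
    | succ m ih =>
        have : (B ^ (m+1)).mulVec r₀ = B.mulVec ((B ^ m).mulVec r₀) := by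
          rw [Matrix.mulVec_mulVec, ← pow_succ']
        rw [this]
        calc euclNorm (B.mulVec ((B ^ m).mulVec r₀))
            ≤ δ * euclNorm ((B ^ m).mulVec r₀) := hBound _
        _ ≤ δ * (δ ^ m * euclNorm r₀) := mul_le_mul_of_nonneg_left ih hδ0.le
        _ = δ ^ (m+1) * euclNorm r₀ := by ring
  -- δ ≤ 2√δ/(1+δ)
  have hδρ : δ ≤ 2 * Real.sqrt δ / (1 + δ) := by
    rw [le_div_iff₀ (by linarith : (0:ℝ) < 1 + δ)]
    set s : ℝ := Real.sqrt δ with hs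
    have hs2 : s ^ 2 = δ := Real.sq_sqrt hδ0.le
    have hspos : 0 < s := Real.sqrt_pos.mpr hδ0
    have hs1 : s < 1 := by nlinarith
    have hfact : 2 * s - δ * (1 + δ) = s * (1 - s) * (s^2 + s + 2) := by
      rw [← hs2]; ring
    have hnn : 0 ≤ s * (1 - s) * (s^2 + s + 2) := by
      apply mul_nonneg (mul_nonneg hspos.le (by linarith))
      nlinarith
    linarith
  have hρnn : 0 ≤ 2 * Real.sqrt δ / (1 + δ) := by positivity
  -- the polynomial
  refine ⟨(1 - Polynomial.X) ^ k, ?_, ?_, ?_⟩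
  · calc ((1 - Polynomial.X : Polynomial ℝ) ^ k).natDegree
        = k * (1 - Polynomial.X : Polynomial ℝ).natDegree := Polynomial.natDegree_pow _ _
    _ ≤ k * 1 := Nat.mul_le_mul_left k (le_trans (Polynomial.natDegree_sub_le _ _) (by simp))
    _ = k := mul_one k
  · simp
  · have haev : Polynomial.aeval (P⁻¹ * L) ((1 - Polynomial.X : Polynomial ℝ) ^ k)
        = (-B) ^ k := by
      rw [map_pow, map_sub, _root_.map_one, Polynomial.aeval_X, hPL]
      congr 1
      abel
    rw [haev]
    have hnegpow : (-B) ^ k = ((-1 : ℝ) ^ k) • (B ^ k) := by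
      rw [← neg_one_smul ℝ B, smul_pow]
    rw [hnegpow, Matrix.smul_mulVec, euclNorm_sign_smul]
    calc euclNorm ((B ^ k).mulVec r₀) ≤ δ ^ k * euclNorm r₀ := hpow k
    _ ≤ (2 * Real.sqrt δ / (1 + δ)) ^ k * euclNorm r₀ :=
        mul_le_mul_of_nonneg_right (pow_le_pow_left₀ hδ0.le hδρ k) (euclNorm_nonneg r₀)
end
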